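/- Let X be a Banach space and S(t) a semigroup on X possessing a compact absorbing set K (i.e., for every bounded B ⊆ X there is t₀(B) with S(t)B ⊆ K for all t ≥ t₀(B)). Then the ω-limit set ω(K) = ⋂_{t≥0} closure(⋃_{s≥t} S(s)K) is nonempty, compact, invariant under S(t), and attracts all bounded sets: for every bounded B ⊆ X, dist(S(t)B, ω(K)) → 0 as t → ∞, where dist(A, B) = sup_{a∈A} inf_{b∈B} ‖a − b‖. -/

import Mathlib

open Set

/-- The `ω`-limit set `ω(K) = ⋂_{t ≥ 0} closure (⋃_{s ≥ t} S(s)K)` of a set `K`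
under a semigroup `S`. -/
def omegaSet {X : Type*} [TopologicalSpace X] (S : ℝ → X → X) (K : Set X) : Set X :=
  ⋂ t ∈ Set.Ici (0 : ℝ), closure (⋃ s ∈ Set.Ici t, S s '' K)

set_option maxHeartbeats 1000000 in
/-- If a strongly continuous semigroup `S(t)` on a Banach space `X`
has a compact absorbing set `K`, then `ω(K)` is nonempty, compact, invariant, and
attracts all bounded sets in the Hausdorff semi-distance. -/
theorem global_attractor_of_compact_absorbing {X : Type*}
    [NormedAddCommGroup X] [Nonempty X]
    (S : ℝ → X → X)
    (hS0 : ∀ x, S 0 x = x)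
    (hSadd : ∀ s t : ℝ, 0 ≤ s → 0 ≤ t → ∀ x, S (s + t) x = S s (S t x))
    (hScont : ∀ t : ℝ, 0 ≤ t → Continuous (S t))
    (hStraj : ∀ x, ContinuousOn (fun t => S t x) (Set.Ici 0))
    (K : Set X) (hK : IsCompact K)
    (habs : ∀ B : Set X, Bornology.IsBounded B →
      ∃ t₀ : ℝ, 0 ≤ t₀ ∧ ∀ t : ℝ, t₀ ≤ t → S t '' B ⊆ K) :
    (omegaSet S K).Nonempty ∧ IsCompact (omegaSet S K) ∧
      (∀ t : ℝ, 0 ≤ t → S t '' omegaSet S K = omegaSet S K) ∧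
      ∀ B : Set X, Bornology.IsBounded B → ∀ ε : ℝ, 0 < ε →
        ∃ T : ℝ, 0 ≤ T ∧ ∀ t : ℝ, T ≤ t → ∀ x ∈ B,
          Metric.infDist (S t x) (omegaSet S K) < ε := by
  classical
  obtain ⟨t₀, ht₀, hKabs⟩ := habs K hK.isBounded
  -- K is nonempty
  have hKne : K.Nonempty := by
    obtain ⟨x₀⟩ := ‹Nonempty X›
    obtain ⟨t₁, ht₁, h⟩ := habs {x₀} Bornology.isBounded_singleton
    exact ⟨S t₁ x₀, h t₁ le_rfl ⟨x₀, rfl, rfl⟩⟩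
  set G : ℝ → Set X := fun t => closure (⋃ s ∈ Set.Ici t, S s '' K) with hG
  have hmono : ∀ {a b : ℝ}, a ≤ b → G b ⊆ G a := by
    intro a b hab
    exact closure_mono (biUnion_subset_biUnion_left (fun s hs => le_trans hab hs))
  have hGsub : ∀ t : ℝ, t₀ ≤ t → G t ⊆ K := by
    intro t ht
    refine closure_minimal ?_ hK.isClosed
    exact iUnion₂_subset fun s hs => hKabs s (le_trans ht hs)
  have hGcpt : ∀ t : ℝ, t₀ ≤ t → IsCompact (G t) := fun t ht =>
    hK.of_isClosed_subset isClosed_closure (hGsub t ht)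
  have hGne : ∀ t : ℝ, (G t).Nonempty := by
    intro t
    obtain ⟨x, hx⟩ := hKne
    exact ⟨S t x, subset_closure (mem_biUnion (mem_Ici.2 le_rfl) ⟨x, hx, rfl⟩)⟩
  have homega : omegaSet S K = ⋂ t ∈ Set.Ici (0:ℝ), G t := rfl
  -- membership criterion from sequences
  have hmem : ∀ (z : ℕ → X) (r : ℕ → ℝ), (∀ n : ℕ, (n:ℝ) ≤ r n) →
      (∀ n : ℕ, z n ∈ ⋃ s ∈ Set.Ici (r n), S s '' K) →
      ∀ y : X, Filter.Tendsto z Filter.atTop (nhds y) → y ∈ omegaSet S K := by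
    intro z r hr hz y hy
    rw [homega]
    refine mem_iInter₂.2 fun t ht => ?_
    refine mem_closure_of_tendsto hy ?_
    obtain ⟨N, hN⟩ := exists_nat_ge t
    refine Filter.eventually_atTop.2 ⟨N, fun n hn => ?_⟩
    have htr : t ≤ r n :=
      calc t ≤ (N:ℝ) := hN
        _ ≤ (n:ℝ) := Nat.cast_le.2 hn
        _ ≤ r n := hr n
    have hthis := hz n
    simp only [mem_iUnion, mem_Ici] at hthis ⊢
    obtain ⟨s', hs', hzs⟩ := hthis
    exact ⟨s', le_trans htr hs', hzs⟩
  have homegasub : omegaSet S K ⊆ K := by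
    rw [homega]
    intro x hx
    exact hGsub t₀ le_rfl (mem_iInter₂.1 hx t₀ ht₀)
  -- nonempty
  have hne : (omegaSet S K).Nonempty := by
    have key : (⋂ n : ℕ, G (t₀ + n)).Nonempty := by
      refine IsCompact.nonempty_iInter_of_directed_nonempty_isCompact_isClosed
        (fun n : ℕ => G (t₀ + n)) ?_ (fun n => hGne _) (fun n => hGcpt _ (le_add_of_nonneg_right (Nat.cast_nonneg n)))
        (fun n => isClosed_closure)
      intro m n
      refine ⟨max m n, hmono (by simp), hmono (by simp)⟩
    obtain ⟨x, hx⟩ := key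
    refine ⟨x, ?_⟩
    rw [homega]
    refine mem_iInter₂.2 fun t ht => ?_
    obtain ⟨n, hn⟩ := exists_nat_ge t
    exact hmono (le_trans hn (by linarith)) (mem_iInter.1 hx n)
  -- compact
  have hcpt : IsCompact (omegaSet S K) := by
    refine hK.of_isClosed_subset ?_ homegasub
    exact isClosed_biInter fun t ht => isClosed_closure
  -- forward invariance
  have hfwd : ∀ t : ℝ, 0 ≤ t → S t '' omegaSet S K ⊆ omegaSet S K := by
    intro t ht
    rintro _ ⟨x, hx, rfl⟩
    rw [homega]
    refine mem_iInter₂.2 fun r hr => ?_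
    have hx' : x ∈ G (max (r - t) 0) := mem_iInter₂.1 hx _ (mem_Ici.2 (le_max_right _ _))
    have h1 : S t x ∈ closure (S t '' (⋃ s ∈ Set.Ici (max (r - t) 0), S s '' K)) :=
      (image_closure_subset_closure_image (hScont t ht)) ⟨x, hx', rfl⟩
    refine closure_mono ?_ h1
    rintro _ ⟨w, hw, rfl⟩
    simp only [mem_iUnion, mem_image] at hw ⊢
    obtain ⟨s, hs, k, hk, rfl⟩ := hw
    refine ⟨t + s, ?_, k, hk, ?_⟩
    · have : r - t ≤ s := le_trans (le_max_left _ _) hs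
      simp only [mem_Ici]; linarith
    · exact hSadd t s ht (le_trans (le_max_right _ _) hs) k
  -- backward invariance
  have hbwd : ∀ t : ℝ, 0 ≤ t → omegaSet S K ⊆ S t '' omegaSet S K := by
    intro t ht y hy
    -- build approximating points
    have hsel : ∀ n : ℕ, ∃ w ∈ ⋃ s ∈ Set.Ici (t + t₀ + n), S s '' K,
        dist w y < 1 / (n + 1 : ℝ) := by
      intro n
      have hy' : y ∈ G (t + t₀ + n) := mem_iInter₂.1 hy _ (by have := Nat.cast_nonneg (α := ℝ) n; simp only [mem_Ici]; linarith)
      have := Metric.mem_closure_iff.1 hy' (1 / (n + 1 : ℝ)) (by positivity)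
      obtain ⟨w, hw, hd⟩ := this
      exact ⟨w, hw, by rwa [dist_comm]⟩
    choose w hw hwd using hsel
    have hsel2 : ∀ n : ℕ, ∃ s : ℝ, t + t₀ + n ≤ s ∧ ∃ k ∈ K, S s k = w n := by
      intro n
      have := hw n
      simp only [mem_iUnion, mem_image, mem_Ici] at this
      obtain ⟨s, hs, k, hk, hsk⟩ := this
      exact ⟨s, hs, k, hk, hsk⟩
    choose s hs k hk hsk using hsel2
    set z : ℕ → X := fun n => S (s n - t) (k n) with hz
    have hsn : ∀ n : ℕ, t₀ + (n:ℝ) ≤ s n - t := fun n => by have := hs n; linarith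
    have hzK : ∀ n, z n ∈ K := fun n =>
      hKabs (s n - t) (le_trans (by have := Nat.cast_nonneg (α := ℝ) n; linarith) (hsn n)) ⟨k n, hk n, rfl⟩
    have hStz : ∀ n, S t (z n) = w n := by
      intro n
      have h0 : 0 ≤ s n - t := le_trans (by have := Nat.cast_nonneg (α := ℝ) n; linarith) (hsn n)
      rw [hz]
      rw [← hSadd t (s n - t) ht h0]
      rw [show t + (s n - t) = s n by ring, hsk n]
    obtain ⟨z', hz'K, φ, hφ, hφt⟩ := hK.tendsto_subseq hzK
    have hz'ω : z' ∈ omegaSet S K := by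
      refine hmem (z ∘ φ) (fun m => t₀ + (φ m : ℝ)) ?_ ?_ z' hφt
      · intro m
        have hmm : (m : ℝ) ≤ (φ m : ℝ) := Nat.cast_le.2 (hφ.le_apply)
        exact le_trans hmm (le_add_of_nonneg_left ht₀)
      · intro m
        simp only [mem_iUnion, mem_image, mem_Ici, Function.comp]
        exact ⟨s (φ m) - t, hsn (φ m), k (φ m), hk (φ m), rfl⟩
    refine ⟨z', hz'ω, ?_⟩
    -- S t z' = y
    have h1 : Filter.Tendsto (fun m => S t (z (φ m))) Filter.atTop (nhds (S t z')) :=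
      ((hScont t ht).tendsto z').comp hφt
    have h2 : Filter.Tendsto (fun m => S t (z (φ m))) Filter.atTop (nhds y) := by
      simp only [hStz]
      rw [tendsto_iff_dist_tendsto_zero]
      refine squeeze_zero (fun m => dist_nonneg) (fun m => (hwd (φ m)).le) ?_
      have : Filter.Tendsto (fun m : ℕ => 1 / ((φ m : ℝ) + 1)) Filter.atTop (nhds 0) :=
        (tendsto_one_div_add_atTop_nhds_zero_nat).comp hφ.tendsto_atTop
      exact this
    exact tendsto_nhds_unique h1 h2
  have hinv : ∀ t : ℝ, 0 ≤ t → S t '' omegaSet S K = omegaSet S K :=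
    fun t ht => le_antisymm (hfwd t ht) (hbwd t ht)
  refine ⟨hne, hcpt, hinv, ?_⟩
  -- attraction of K
  have hattrK : ∀ ε : ℝ, 0 < ε → ∃ T : ℝ, 0 ≤ T ∧ ∀ σ : ℝ, T ≤ σ → ∀ x ∈ K,
      Metric.infDist (S σ x) (omegaSet S K) < ε := by
    intro ε hε
    by_contra hcon
    push_neg at hcon
    have hsel : ∀ n : ℕ, ∃ σ : ℝ, t₀ + n ≤ σ ∧ ∃ x ∈ K,
        ε ≤ Metric.infDist (S σ x) (omegaSet S K) := by
      intro n
      obtain ⟨σ, hσ, x, hx, hd⟩ := hcon (t₀ + n) (by have := Nat.cast_nonneg (α := ℝ) n; linarith)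
      exact ⟨σ, hσ, x, hx, hd⟩
    choose σ hσ x hx hd using hsel
    set y : ℕ → X := fun n => S (σ n) (x n) with hy
    have hyK : ∀ n, y n ∈ K := fun n =>
      hKabs (σ n) (le_trans (by have := Nat.cast_nonneg (α := ℝ) n; linarith) (hσ n)) ⟨x n, hx n, rfl⟩
    obtain ⟨y', hy'K, φ, hφ, hφt⟩ := hK.tendsto_subseq hyK
    have hy'ω : y' ∈ omegaSet S K := by
      refine hmem (y ∘ φ) (fun m => t₀ + (φ m : ℝ)) ?_ ?_ y' hφt
      · intro m
        have hmm : (m : ℝ) ≤ (φ m : ℝ) := Nat.cast_le.2 (hφ.le_apply)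
        exact le_trans hmm (le_add_of_nonneg_left ht₀)
      · intro m
        simp only [mem_iUnion, mem_image, mem_Ici, Function.comp]
        exact ⟨σ (φ m), hσ (φ m), x (φ m), hx (φ m), rfl⟩
    have h1 : Filter.Tendsto (fun m => Metric.infDist (y (φ m)) (omegaSet S K))
        Filter.atTop (nhds (Metric.infDist y' (omegaSet S K))) :=
      ((Metric.continuous_infDist_pt (omegaSet S K)).tendsto y').comp hφt
    have h2 : ε ≤ Metric.infDist y' (omegaSet S K) :=
      le_of_tendsto_of_tendsto' tendsto_const_nhds h1 (fun m => hd (φ m))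
    rw [Metric.infDist_zero_of_mem hy'ω] at h2
    linarith
  intro B hB ε hε
  obtain ⟨tB, htB, hBabs⟩ := habs B hB
  obtain ⟨T₁, hT₁, hT₁attr⟩ := hattrK ε hε
  refine ⟨tB + T₁, by positivity, fun t ht x hxB => ?_⟩
  have h0 : 0 ≤ t - tB := by linarith
  have hEq : S t x = S (t - tB) (S tB x) := by
    rw [← hSadd (t - tB) tB h0 htB, show t - tB + tB = t by ring]
  rw [hEq]
  exact hT₁attr (t - tB) (by linarith) (S tB x) (hBabs tB le_rfl ⟨x, hxB, rfl⟩)
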